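/- Let α, β ∈ 𝕃 have odd norms and suppose they are twins. Then α and β do not lie in the same parity class S_g: there is no g ∈ {1,i,j,k} with both α ∈ S_g and β ∈ S_g. -/
import Mathlib


open scoped Quaternion

lemma core (x1 x2 x3 x4 y1 y2 y3 y4 : ℤ)
    (h2 : x1 % 2 ≠ x2 % 2) (h3 : x1 % 2 ≠ x3 % 2) (h4 : x1 % 2 ≠ x4 % 2)
    (g2 : y1 % 2 ≠ y2 % 2) (g3 : y1 % 2 ≠ y3 % 2) (g4 : y1 % 2 ≠ y4 % 2)
    (hdot : x1*y1 + x2*y2 + x3*y3 + x4*y4 = 0)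
    (hnorm : x1^2 + x2^2 + x3^2 + x4^2 = y1^2 + y2^2 + y3^2 + y4^2) : False := by
  rcases Int.emod_two_eq x1 with ha | ha <;> rcases Int.emod_two_eq y1 with hb | hb
  · -- x1 even, y1 even : dot product is odd, contradiction
    obtain ⟨a1, rfl⟩ : ∃ q, x1 = 2*q := ⟨x1/2, by omega⟩
    obtain ⟨a2, rfl⟩ : ∃ q, x2 = 2*q+1 := ⟨x2/2, by omega⟩
    obtain ⟨a3, rfl⟩ : ∃ q, x3 = 2*q+1 := ⟨x3/2, by omega⟩
    obtain ⟨a4, rfl⟩ : ∃ q, x4 = 2*q+1 := ⟨x4/2, by omega⟩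
    obtain ⟨b1, rfl⟩ : ∃ q, y1 = 2*q := ⟨y1/2, by omega⟩
    obtain ⟨b2, rfl⟩ : ∃ q, y2 = 2*q+1 := ⟨y2/2, by omega⟩
    obtain ⟨b3, rfl⟩ : ∃ q, y3 = 2*q+1 := ⟨y3/2, by omega⟩
    obtain ⟨b4, rfl⟩ : ∃ q, y4 = 2*q+1 := ⟨y4/2, by omega⟩
    have H : ((2*a1*(2*b1) + (2*a2+1)*(2*b2+1) + (2*a3+1)*(2*b3+1) + (2*a4+1)*(2*b4+1) : ℤ) : ZMod 2) = 0 := by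
      rw [hdot]; push_cast; ring
    push_cast at H; ring_nf at H
    simp [show ((2:ZMod 2)) = 0 from rfl, show ((4:ZMod 2)) = 0 from rfl] at H
    exact absurd H (by decide)
  · -- x1 even, y1 odd : norms differ mod 4
    obtain ⟨a1, rfl⟩ : ∃ q, x1 = 2*q := ⟨x1/2, by omega⟩
    obtain ⟨a2, rfl⟩ : ∃ q, x2 = 2*q+1 := ⟨x2/2, by omega⟩
    obtain ⟨a3, rfl⟩ : ∃ q, x3 = 2*q+1 := ⟨x3/2, by omega⟩
    obtain ⟨a4, rfl⟩ : ∃ q, x4 = 2*q+1 := ⟨x4/2, by omega⟩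
    obtain ⟨b1, rfl⟩ : ∃ q, y1 = 2*q+1 := ⟨y1/2, by omega⟩
    obtain ⟨b2, rfl⟩ : ∃ q, y2 = 2*q := ⟨y2/2, by omega⟩
    obtain ⟨b3, rfl⟩ : ∃ q, y3 = 2*q := ⟨y3/2, by omega⟩
    obtain ⟨b4, rfl⟩ : ∃ q, y4 = 2*q := ⟨y4/2, by omega⟩
    have H : (((2*a1)^2 + (2*a2+1)^2 + (2*a3+1)^2 + (2*a4+1)^2 : ℤ) : ZMod 4)
        = (((2*b1+1)^2 + (2*b2)^2 + (2*b3)^2 + (2*b4)^2 : ℤ) : ZMod 4) := by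
      rw [hnorm]
    push_cast at H; ring_nf at H
    simp [show ((4:ZMod 4)) = 0 from rfl, show ((8:ZMod 4)) = 0 from rfl,
      show ((16:ZMod 4)) = 0 from rfl, show ((12:ZMod 4)) = 0 from rfl] at H
    exact absurd H (by decide)
  · -- x1 odd, y1 even : symmetric
    obtain ⟨a1, rfl⟩ : ∃ q, x1 = 2*q+1 := ⟨x1/2, by omega⟩
    obtain ⟨a2, rfl⟩ : ∃ q, x2 = 2*q := ⟨x2/2, by omega⟩
    obtain ⟨a3, rfl⟩ : ∃ q, x3 = 2*q := ⟨x3/2, by omega⟩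
    obtain ⟨a4, rfl⟩ : ∃ q, x4 = 2*q := ⟨x4/2, by omega⟩
    obtain ⟨b1, rfl⟩ : ∃ q, y1 = 2*q := ⟨y1/2, by omega⟩
    obtain ⟨b2, rfl⟩ : ∃ q, y2 = 2*q+1 := ⟨y2/2, by omega⟩
    obtain ⟨b3, rfl⟩ : ∃ q, y3 = 2*q+1 := ⟨y3/2, by omega⟩
    obtain ⟨b4, rfl⟩ : ∃ q, y4 = 2*q+1 := ⟨y4/2, by omega⟩
    have H : (((2*a1+1)^2 + (2*a2)^2 + (2*a3)^2 + (2*a4)^2 : ℤ) : ZMod 4)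
        = (((2*b1)^2 + (2*b2+1)^2 + (2*b3+1)^2 + (2*b4+1)^2 : ℤ) : ZMod 4) := by
      rw [hnorm]
    push_cast at H; ring_nf at H
    simp [show ((4:ZMod 4)) = 0 from rfl, show ((8:ZMod 4)) = 0 from rfl,
      show ((16:ZMod 4)) = 0 from rfl, show ((12:ZMod 4)) = 0 from rfl] at H
    exact absurd H (by decide)
  · -- x1 odd, y1 odd : dot product is odd
    obtain ⟨a1, rfl⟩ : ∃ q, x1 = 2*q+1 := ⟨x1/2, by omega⟩
    obtain ⟨a2, rfl⟩ : ∃ q, x2 = 2*q := ⟨x2/2, by omega⟩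
    obtain ⟨a3, rfl⟩ : ∃ q, x3 = 2*q := ⟨x3/2, by omega⟩
    obtain ⟨a4, rfl⟩ : ∃ q, x4 = 2*q := ⟨x4/2, by omega⟩
    obtain ⟨b1, rfl⟩ : ∃ q, y1 = 2*q+1 := ⟨y1/2, by omega⟩
    obtain ⟨b2, rfl⟩ : ∃ q, y2 = 2*q := ⟨y2/2, by omega⟩
    obtain ⟨b3, rfl⟩ : ∃ q, y3 = 2*q := ⟨y3/2, by omega⟩
    obtain ⟨b4, rfl⟩ : ∃ q, y4 = 2*q := ⟨y4/2, by omega⟩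
    have H : (((2*a1+1)*(2*b1+1) + 2*a2*(2*b2) + 2*a3*(2*b3) + 2*a4*(2*b4) : ℤ) : ZMod 2) = 0 := by
      rw [hdot]; push_cast; ring
    push_cast at H; ring_nf at H
    simp [show ((2:ZMod 2)) = 0 from rfl, show ((4:ZMod 2)) = 0 from rfl] at H


/-- The four coefficients of a Lipschitz quaternion, indexed by the Klein four-group
`Bool × Bool`, where (false,false) ↦ 1, (true,false) ↦ i, (false,true) ↦ j,
(true,true) ↦ k. -/
def coeff (α : ℍ[ℤ]) : Bool × Bool → ℤ
  | (false, false) => α.re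
  | (true, false) => α.imI
  | (false, true) => α.imJ
  | (true, true) => α.imK

/-- α ∈ S_g : the coefficient indexed by g has parity different from each of the
other three coefficients. -/
def InS (g : Bool × Bool) (α : ℍ[ℤ]) : Prop :=
  ∀ h : Bool × Bool, h ≠ g → coeff α g % 2 ≠ coeff α h % 2

/-- Twins: orthogonal coefficient vectors of equal length. -/
def Twin (α β : ℍ[ℤ]) : Prop :=
  α.re * β.re + α.imI * β.imI + α.imJ * β.imJ + α.imK * β.imK = 0 ∧
    Quaternion.normSq α = Quaternion.normSq β

/-- twins of odd norm cannot lie in the same parity class S_g. -/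
theorem twins_not_same_class (α β : ℍ[ℤ])
    (hα : Odd (Quaternion.normSq α)) (hβ : Odd (Quaternion.normSq β))
    (htwin : Twin α β) :
    ¬∃ g : Bool × Bool, InS g α ∧ InS g β := by
  rintro ⟨⟨b1, b2⟩, hA, hB⟩
  obtain ⟨hd, hn⟩ := htwin
  rw [Quaternion.normSq_def' α, Quaternion.normSq_def' β] at hn
  cases b1 <;> cases b2
  · exact core α.re α.imI α.imJ α.imK β.re β.imI β.imJ β.imK
      (hA (true, false) (by simp)) (hA (false, true) (by simp)) (hA (true, true) (by simp))
      (hB (true, false) (by simp)) (hB (false, true) (by simp)) (hB (true, true) (by simp))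
      (by linarith) (by linarith)
  · exact core α.imJ α.re α.imI α.imK β.imJ β.re β.imI β.imK
      (hA (false, false) (by simp)) (hA (true, false) (by simp)) (hA (true, true) (by simp))
      (hB (false, false) (by simp)) (hB (true, false) (by simp)) (hB (true, true) (by simp))
      (by linarith) (by linarith)
  · exact core α.imI α.re α.imJ α.imK β.imI β.re β.imJ β.imK
      (hA (false, false) (by simp)) (hA (false, true) (by simp)) (hA (true, true) (by simp))
      (hB (false, false) (by simp)) (hB (false, true) (by simp)) (hB (true, true) (by simp))
      (by linarith) (by linarith)
  · exact core α.imK α.re α.imI α.imJ β.imK β.re β.imI β.imJ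
      (hA (false, false) (by simp)) (hA (true, false) (by simp)) (hA (false, true) (by simp))
      (hB (false, false) (by simp)) (hB (true, false) (by simp)) (hB (false, true) (by simp))
      (by linarith) (by linarith)
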